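/- Gauge invariance of the current helicity functional: let H : ℝ³ → ℝ³ be a continuously differentiable vector field with compact support and φ : ℝ³ → ℝ a twice continuously differentiable function with compact support. Then ∫ x, ⟪H x + grad φ x, curl (fun y => H y + grad φ y) x⟫ = ∫ x, ⟪H x, curl H x⟫, where the integrals are Lebesgue integrals over ℝ³. (Adding an exact 1-form, i.e. a gradient, does not change the helicity when boundary terms vanish.) -/

import Mathlib

noncomputable section
open scoped RealInnerProductSpace

/-- `ℝ³` as Euclidean space. -/
abbrev R3 : Type := EuclideanSpace ℝ (Fin 3)

/-- Cross product on `ℝ³ = EuclideanSpace ℝ (Fin 3)`, transported from Mathlib's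
`crossProduct` on `Fin 3 → ℝ`. -/
def cross3 (u v : R3) : R3 :=
  (EuclideanSpace.equiv (Fin 3) ℝ).symm
    (crossProduct ((EuclideanSpace.equiv (Fin 3) ℝ) u) ((EuclideanSpace.equiv (Fin 3) ℝ) v))

/-- Partial derivative of a vector field in the `i`-th coordinate direction,
computed via `fderiv ℝ`. -/
def pd (i : Fin 3) (F : R3 → R3) (x : R3) : R3 :=
  fderiv ℝ F x (EuclideanSpace.single i 1)

/-- The curl of a vector field on `ℝ³`: with coordinates indexed by `0, 1, 2`, its
components are `(∂₁F₂ − ∂₂F₁, ∂₂F₀ − ∂₀F₂, ∂₀F₁ − ∂₁F₀)`. -/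
def curl3 (F : R3 → R3) (x : R3) : R3 :=
  (EuclideanSpace.equiv (Fin 3) ℝ).symm
    ![pd 1 F x 2 - pd 2 F x 1,
      pd 2 F x 0 - pd 0 F x 2,
      pd 0 F x 1 - pd 1 F x 0]

/-- The divergence of a vector field on `ℝ³`. -/
def div3 (F : R3 → R3) (x : R3) : ℝ := ∑ i, pd i F x i

open MeasureTheory

namespace HelicityAux

/-- Standard basis vectors. -/
abbrev ee (i : Fin 3) : R3 := EuclideanSpace.single i 1

lemma curl3_apply0 (F : R3 → R3) (x : R3) : curl3 F x 0 = pd 1 F x 2 - pd 2 F x 1 := rfl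
lemma curl3_apply1 (F : R3 → R3) (x : R3) : curl3 F x 1 = pd 2 F x 0 - pd 0 F x 2 := rfl
lemma curl3_apply2 (F : R3 → R3) (x : R3) : curl3 F x 2 = pd 0 F x 1 - pd 1 F x 0 := rfl

lemma toDual_symm_comp (L : R3 →L[ℝ] ℝ) (j : Fin 3) :
    ((InnerProductSpace.toDual ℝ R3).symm L) j = L (ee j) := by
  have h := InnerProductSpace.toDual_symm_apply (𝕜 := ℝ) (E := R3) (y := L) (x := ee j)
  have h2 : ∀ u : R3, (inner ℝ u (ee j) : ℝ) = u j := fun u => by simp [ee, PiLp.inner_apply, EuclideanSpace.single_apply]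
  exact (h2 _).symm.trans h

lemma grad_apply (φ : R3 → ℝ) (x : R3) (j : Fin 3) :
    gradient φ x j = fderiv ℝ φ x (ee j) := toDual_symm_comp _ j

lemma inner_expand (u v : R3) : ⟪u, v⟫ = u 0 * v 0 + u 1 * v 1 + u 2 * v 2 := by
  simp [PiLp.inner_apply, RCLike.inner_apply, Fin.sum_univ_three]
  ring

/-- Integration by parts for compactly supported `C¹` functions on `ℝ³`. -/
lemma ibp (f g : R3 → ℝ) (hf : ContDiff ℝ 1 f) (hfc : HasCompactSupport f)
    (hg : ContDiff ℝ 1 g) (hgc : HasCompactSupport g) (v : R3) :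
    ∫ x : R3, fderiv ℝ f x v * g x = -∫ x : R3, fderiv ℝ g x v * f x := by
  obtain ⟨C, hC⟩ := ContDiff.lipschitzWith_of_hasCompactSupport hfc hf one_ne_zero
  obtain ⟨D, hD⟩ := ContDiff.lipschitzWith_of_hasCompactSupport hgc hg one_ne_zero
  have h := LipschitzWith.integral_lineDeriv_mul_eq (μ := (volume : Measure R3)) hC hD hgc v
  have e1 : ∀ x : R3, lineDeriv ℝ f x v = fderiv ℝ f x v := fun x =>
    ((hf.differentiable one_ne_zero) x).lineDeriv_eq_fderiv
  have e2 : ∀ x : R3, lineDeriv ℝ g x (-v) = -(fderiv ℝ g x v) := fun x => by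
    rw [((hg.differentiable one_ne_zero) x).lineDeriv_eq_fderiv, map_neg]
  simp only [e1, e2, neg_mul] at h
  rw [h, integral_neg]

lemma hc1 (φ : R3 → ℝ) (hφ : ContDiff ℝ 2 φ) : ContDiff ℝ 1 (fderiv ℝ φ) :=
  hφ.fderiv_right (by norm_num)

lemma fderiv_eval_const (φ : R3 → ℝ) (hφ : ContDiff ℝ 2 φ) (v w : R3) (x : R3) :
    fderiv ℝ (fun y => fderiv ℝ φ y v) x w = fderiv ℝ (fderiv ℝ φ) x w v := by
  have hd : DifferentiableAt ℝ (fderiv ℝ φ) x := (hc1 φ hφ).differentiable one_ne_zero x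
  rw [fderiv_clm_apply hd (differentiableAt_const v)]
  simp

lemma contDiff_D (φ : R3 → ℝ) (hφ : ContDiff ℝ 2 φ) (i : Fin 3) :
    ContDiff ℝ 1 (fun x : R3 => fderiv ℝ φ x (ee i)) :=
  (hc1 φ hφ).clm_apply contDiff_const

lemma compact_D (φ : R3 → ℝ) (hφc : HasCompactSupport φ) (i : Fin 3) :
    HasCompactSupport (fun x : R3 => fderiv ℝ φ x (ee i)) :=
  (hφc.fderiv (𝕜 := ℝ)).comp_left (g := fun L : R3 →L[ℝ] ℝ => L (ee i)) rfl

lemma contDiff_Hk (H : R3 → R3) (hH : ContDiff ℝ 1 H) (k : Fin 3) :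
    ContDiff ℝ 1 (fun y => H y k) :=
  (EuclideanSpace.proj (𝕜 := ℝ) (i := k)).contDiff.comp hH

lemma compact_Hk (H : R3 → R3) (hHc : HasCompactSupport H) (k : Fin 3) :
    HasCompactSupport (fun y => H y k) :=
  hHc.comp_left (g := fun v : R3 => v k) rfl

lemma pd_apply (H : R3 → R3) (hH : ContDiff ℝ 1 H) (j k : Fin 3) (x : R3) :
    fderiv ℝ (fun y => H y k) x (ee j) = pd j H x k := by
  have h0 : (fun y => H y k) = (EuclideanSpace.proj k : R3 →L[ℝ] ℝ) ∘ H := rfl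
  rw [pd, h0, fderiv_comp x (ContinuousLinearMap.differentiableAt _)
    ((hH.differentiable one_ne_zero) x), ContinuousLinearMap.fderiv]
  rfl

lemma grad_contDiff (φ : R3 → ℝ) (hφ : ContDiff ℝ 2 φ) : ContDiff ℝ 1 (gradient φ) := by
  have h0 : gradient φ
      = (fun L : R3 →L[ℝ] ℝ => (InnerProductSpace.toDual ℝ R3).symm L) ∘ (fderiv ℝ φ) := rfl
  rw [h0]
  exact (InnerProductSpace.toDual ℝ R3).symm.contDiff.comp (hc1 φ hφ)

lemma grad_compact (φ : R3 → ℝ) (hφc : HasCompactSupport φ) :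
    HasCompactSupport (gradient φ) :=
  (hφc.fderiv (𝕜 := ℝ)).comp_left
    (g := fun L : R3 →L[ℝ] ℝ => (InnerProductSpace.toDual ℝ R3).symm L) (map_zero _)

lemma pd_grad (φ : R3 → ℝ) (i j : Fin 3) (x : R3) :
    pd i (gradient φ) x j = fderiv ℝ (fderiv ℝ φ) x (ee i) (ee j) := by
  have h0 : gradient φ
      = ((InnerProductSpace.toDual ℝ R3).symm : (R3 →L[ℝ] ℝ) → R3) ∘ (fderiv ℝ φ) := rfl
  rw [pd, h0, LinearIsometryEquiv.comp_fderiv]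
  exact toDual_symm_comp _ j

lemma cont_pdk (H : R3 → R3) (hH : ContDiff ℝ 1 H) (j k : Fin 3) :
    Continuous fun x : R3 => pd j H x k := by
  have h1 : Continuous fun x : R3 => fderiv ℝ H x := hH.continuous_fderiv one_ne_zero
  exact (EuclideanSpace.proj (𝕜 := ℝ) (i := k)).continuous.comp
    (h1.clm_apply continuous_const)

lemma cont_curl3 (H : R3 → R3) (hH : ContDiff ℝ 1 H) : Continuous (curl3 H) := by
  unfold curl3
  refine ((EuclideanSpace.equiv (Fin 3) ℝ).symm.continuous).comp ?_
  refine continuous_pi fun j => ?_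
  fin_cases j <;>
    · simp only [Matrix.cons_val_zero, Matrix.cons_val_one, Matrix.head_cons, Fin.isValue]
      exact (cont_pdk H hH _ _).sub (cont_pdk H hH _ _)

end HelicityAux

open HelicityAux

/-- Gauge invariance of the current helicity functional: adding a gradient to a
compactly supported `C¹` field does not change the helicity integral. -/
theorem helicity_gauge_invariant (H : R3 → R3) (hH : ContDiff ℝ 1 H)
    (hHc : HasCompactSupport H) (φ : R3 → ℝ) (hφ : ContDiff ℝ 2 φ)
    (hφc : HasCompactSupport φ) :
    ∫ x : R3, ⟪H x + gradient φ x, curl3 (fun y => H y + gradient φ y) x⟫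
      = ∫ x : R3, ⟪H x, curl3 H x⟫ := by
  have hG : ContDiff ℝ 1 (gradient φ) := grad_contDiff φ hφ
  have hGc : HasCompactSupport (gradient φ) := grad_compact φ hφc
  have hsym : ∀ x : R3, ∀ v w : R3,
      fderiv ℝ (fderiv ℝ φ) x v w = fderiv ℝ (fderiv ℝ φ) x w v := fun x =>
    hφ.contDiffAt.isSymmSndFDerivAt (by simp [minSmoothness_of_isRCLikeNormedField])
  -- pointwise splitting of the integrand
  have hpoint : ∀ x : R3,
      (⟪H x + gradient φ x, curl3 (fun y => H y + gradient φ y) x⟫ : ℝ)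
        = ⟪H x, curl3 H x⟫ + ⟪gradient φ x, curl3 H x⟫ := by
    intro x
    have hHd : DifferentiableAt ℝ H x := (hH.differentiable one_ne_zero) x
    have hGd : DifferentiableAt ℝ (gradient φ) x := (hG.differentiable one_ne_zero) x
    have hpd : ∀ i k : Fin 3,
        pd i (fun y => H y + gradient φ y) x k = pd i H x k + pd i (gradient φ) x k := by
      intro i k
      unfold pd
      rw [fderiv_fun_add hHd hGd]
      rfl
    have hc0 : curl3 (fun y => H y + gradient φ y) x 0 = curl3 H x 0 := by
      rw [curl3_apply0, curl3_apply0, hpd, hpd, pd_grad, pd_grad]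
      have := hsym x (ee 1) (ee 2)
      linarith
    have hc1 : curl3 (fun y => H y + gradient φ y) x 1 = curl3 H x 1 := by
      rw [curl3_apply1, curl3_apply1, hpd, hpd, pd_grad, pd_grad]
      have := hsym x (ee 2) (ee 0)
      linarith
    have hc2 : curl3 (fun y => H y + gradient φ y) x 2 = curl3 H x 2 := by
      rw [curl3_apply2, curl3_apply2, hpd, hpd, pd_grad, pd_grad]
      have := hsym x (ee 0) (ee 1)
      linarith
    rw [inner_expand, inner_expand, inner_expand, hc0, hc1, hc2]
    simp only [PiLp.add_apply]
    ring
  -- integrability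
  have hA : Integrable (fun x : R3 => (⟪H x, curl3 H x⟫ : ℝ)) := by
    apply Continuous.integrable_of_hasCompactSupport
      ((hH.continuous).inner (cont_curl3 H hH))
    refine HasCompactSupport.mono hHc fun x hx => ?_
    simp only [Function.mem_support] at hx ⊢
    intro h0
    exact hx (by rw [h0, inner_zero_left])
  have hB : Integrable (fun x : R3 => (⟪gradient φ x, curl3 H x⟫ : ℝ)) := by
    apply Continuous.integrable_of_hasCompactSupport
      ((hG.continuous).inner (cont_curl3 H hH))
    refine HasCompactSupport.mono hGc fun x hx => ?_
    simp only [Function.mem_support] at hx ⊢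
    intro h0
    exact hx (by rw [h0, inner_zero_left])
  -- the gradient term integrates to zero
  have hint : ∀ i j k : Fin 3, Integrable
      (fun x : R3 => fderiv ℝ (fun y => H y k) x (ee j) * fderiv ℝ φ x (ee i)) := by
    intro i j k
    apply Continuous.integrable_of_hasCompactSupport
    · exact (((contDiff_Hk H hH k).continuous_fderiv one_ne_zero).clm_apply
        continuous_const).mul (((hc1 φ hφ).continuous).clm_apply continuous_const)
    · exact (compact_D φ hφc i).mul_left
  have hT : ∀ i j k : Fin 3,
      (∫ x : R3, fderiv ℝ (fun y => H y k) x (ee j) * fderiv ℝ φ x (ee i))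
        = -∫ x : R3, fderiv ℝ (fderiv ℝ φ) x (ee i) (ee j) * H x k := by
    intro i j k
    have h := ibp (fun y => H y k) (fun x : R3 => fderiv ℝ φ x (ee i))
      (contDiff_Hk H hH k) (compact_Hk H hHc k) (contDiff_D φ hφ i) (compact_D φ hφc i)
      (ee j)
    have h2 : ∀ x : R3, fderiv ℝ (fun y => fderiv ℝ φ y (ee i)) x (ee j)
        = fderiv ℝ (fderiv ℝ φ) x (ee i) (ee j) := fun x =>
      (fderiv_eval_const φ hφ (ee i) (ee j) x).trans (hsym x (ee j) (ee i))
    simp only [h2] at h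
    exact h
  have hSsym : ∀ i j k : Fin 3,
      (∫ x : R3, fderiv ℝ (fderiv ℝ φ) x (ee i) (ee j) * H x k)
        = ∫ x : R3, fderiv ℝ (fderiv ℝ φ) x (ee j) (ee i) * H x k := by
    intro i j k
    have h0 : (fun x : R3 => fderiv ℝ (fderiv ℝ φ) x (ee i) (ee j) * H x k)
        = fun x : R3 => fderiv ℝ (fderiv ℝ φ) x (ee j) (ee i) * H x k :=
      funext fun x => by rw [hsym x (ee i) (ee j)]
    rw [h0]
  have hBexp : ∀ x : R3, (⟪gradient φ x, curl3 H x⟫ : ℝ)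
      = (fderiv ℝ (fun y => H y 2) x (ee 1) * fderiv ℝ φ x (ee 0)
          - fderiv ℝ (fun y => H y 1) x (ee 2) * fderiv ℝ φ x (ee 0))
        + ((fderiv ℝ (fun y => H y 0) x (ee 2) * fderiv ℝ φ x (ee 1)
          - fderiv ℝ (fun y => H y 2) x (ee 0) * fderiv ℝ φ x (ee 1))
        + (fderiv ℝ (fun y => H y 1) x (ee 0) * fderiv ℝ φ x (ee 2)
          - fderiv ℝ (fun y => H y 0) x (ee 1) * fderiv ℝ φ x (ee 2))) := by
    intro x
    rw [inner_expand, curl3_apply0, curl3_apply1, curl3_apply2,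
      grad_apply φ x 0, grad_apply φ x 1, grad_apply φ x 2,
      pd_apply H hH 1 2 x, pd_apply H hH 2 1 x, pd_apply H hH 2 0 x,
      pd_apply H hH 0 2 x, pd_apply H hH 0 1 x, pd_apply H hH 1 0 x]
    ring
  have hB0 : (∫ x : R3, (⟪gradient φ x, curl3 H x⟫ : ℝ)) = 0 := by
    simp only [hBexp]
    have i12 : Integrable (fun x : R3 =>
        fderiv ℝ (fun y => H y 2) x (ee 1) * fderiv ℝ φ x (ee 0)
          - fderiv ℝ (fun y => H y 1) x (ee 2) * fderiv ℝ φ x (ee 0)) volume :=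
      (hint 0 1 2).sub (hint 0 2 1)
    have i34 : Integrable (fun x : R3 =>
        fderiv ℝ (fun y => H y 0) x (ee 2) * fderiv ℝ φ x (ee 1)
          - fderiv ℝ (fun y => H y 2) x (ee 0) * fderiv ℝ φ x (ee 1)) volume :=
      (hint 1 2 0).sub (hint 1 0 2)
    have i56 : Integrable (fun x : R3 =>
        fderiv ℝ (fun y => H y 1) x (ee 0) * fderiv ℝ φ x (ee 2)
          - fderiv ℝ (fun y => H y 0) x (ee 1) * fderiv ℝ φ x (ee 2)) volume :=
      (hint 2 0 1).sub (hint 2 1 0)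
    have i3456 : Integrable (fun x : R3 =>
        (fderiv ℝ (fun y => H y 0) x (ee 2) * fderiv ℝ φ x (ee 1)
          - fderiv ℝ (fun y => H y 2) x (ee 0) * fderiv ℝ φ x (ee 1))
        + (fderiv ℝ (fun y => H y 1) x (ee 0) * fderiv ℝ φ x (ee 2)
          - fderiv ℝ (fun y => H y 0) x (ee 1) * fderiv ℝ φ x (ee 2))) volume :=
      i34.add i56
    rw [integral_add i12 i3456, integral_add i34 i56,
      integral_sub (hint 0 1 2) (hint 0 2 1),
      integral_sub (hint 1 2 0) (hint 1 0 2),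
      integral_sub (hint 2 0 1) (hint 2 1 0),
      hT 0 1 2, hT 0 2 1, hT 1 2 0, hT 1 0 2, hT 2 0 1, hT 2 1 0]
    have e1 := hSsym 0 1 2
    have e2 := hSsym 0 2 1
    have e3 := hSsym 1 2 0
    linarith
  calc ∫ x : R3, (⟪H x + gradient φ x, curl3 (fun y => H y + gradient φ y) x⟫ : ℝ)
      = ∫ x : R3, ((⟪H x, curl3 H x⟫ : ℝ) + ⟪gradient φ x, curl3 H x⟫) := by
        simp only [hpoint]
    _ = (∫ x : R3, (⟪H x, curl3 H x⟫ : ℝ)) + ∫ x : R3, (⟪gradient φ x, curl3 H x⟫ : ℝ) :=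
        integral_add hA hB
    _ = ∫ x : R3, (⟪H x, curl3 H x⟫ : ℝ) := by rw [hB0, add_zero]
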